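/- Let S be a commutative ordered monoid with transitive auxiliary relation ≪ refining ≤ and compatible with addition. Suppose there exist M₁, L₁ ∈ ℕ (both ≥ 1) such that: (a) for every N ≥ 1 and x' ≪ x there exists z with z ≪ x, x' ≪ N • z, and N • z ≪ M₁ • x; (b) for every pair x' ≪ x and every m there exist y₀, …, y_m with y₀ + ⋯ + y_m ≤ x and x' ≪ L₁ • yⱼ for all j; and (c) S has m-comparison: if (k+1) • u ≤ k • vⱼ for some k and all j = 0, …, m, then u ≤ v₀ + ⋯ + v_m. Then S is n-almost divisible for n = 2 L₁ M₁: for every x' ≪ x and every k ≥ 1 there exists z' ∈ S with k • z' ≤ x and x' ≤ (k+1)(n+1) • z'. -/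

import Mathlib

/-- Abstract (ii) ⟹ (iii) step of Theorem 5.5: a positively ordered abstract
Cuntz semigroup satisfying the divisibility condition (a), the halving-type
condition (b), and `m`-comparison (c) is `n`-almost divisible for
`n = 2 * L₁ * M₁`. -/
theorem almost_divisible_of_conditions {S : Type*} [AddCommMonoid S] [PartialOrder S] [IsOrderedAddMonoid S]
    (wb : S → S → Prop)
    (hwb_trans : ∀ a b c : S, wb a b → wb b c → wb a c)
    (hwb_le : ∀ a b : S, wb a b → a ≤ b)
    (hwb_add : ∀ a b c d : S, wb a b → wb c d → wb (a + c) (b + d))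
    (hwb_smul : ∀ (n : ℕ) (a b : S), wb a b → wb (n • a) (n • b))
    (hinterp : ∀ a b : S, wb a b → ∃ c : S, wb a c ∧ wb c b)
    (m : ℕ) (M₁ L₁ : ℕ) (hM₁ : 1 ≤ M₁) (hL₁ : 1 ≤ L₁)
    -- (a) divisibility with remainder control
    (ha : ∀ N : ℕ, 1 ≤ N → ∀ x' x : S, wb x' x →
      ∃ z : S, wb z x ∧ wb x' (N • z) ∧ wb (N • z) (M₁ • x))
    -- (b) halving-type condition
    (hb : ∀ x' x : S, wb x' x →
      ∃ y : Fin (m + 1) → S, (∑ j, y j) ≤ x ∧ ∀ j, wb x' (L₁ • y j))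
    -- (c) m-comparison
    (hc : ∀ (u : S) (v : Fin (m + 1) → S),
      (∀ j, ∃ k : ℕ, 1 ≤ k ∧ (k + 1) • u ≤ k • v j) → u ≤ ∑ j, v j) :
    ∀ x' x : S, wb x' x → ∀ k : ℕ, 1 ≤ k →
      ∃ z' : S, k • z' ≤ x ∧ x' ≤ ((k + 1) * (2 * L₁ * M₁ + 1)) • z' := by
  intro x' x hxx k hk
  -- interpolate x' ≪ x'' ≪ x
  obtain ⟨x'', hx1, hx2⟩ := hinterp x' x hxx
  -- apply (b) to x'' ≪ x
  obtain ⟨y, hysum, hy⟩ := hb x'' x hx2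
  -- the constants
  set A : ℕ := (k + 1) * (2 * L₁ * M₁ + 1) with hA
  set s : ℕ := k * L₁ * M₁ + 2 * L₁ * M₁ + k + 1 with hs
  have hApos : 0 < A := by positivity
  have hspos : 0 < s := by positivity
  have hNpos : 0 < s * A := Nat.mul_pos hspos hApos
  -- apply (a) with N = s * A to x' ≪ x''
  obtain ⟨z, hz1, hz2, hz3⟩ := ha (s * A) hNpos x' x'' hx1
  refine ⟨s • z, ?_, ?_⟩
  · -- k • (s • z) ≤ x via m-comparison
    have key : ∀ j, (k * L₁ * A + 1) • (k • s • z) ≤ (k * L₁ * A) • y j := by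
      intro j
      -- e1 : (s*A) • z ≤ (M₁*L₁) • y j
      have e1 : (s * A) • z ≤ (M₁ * L₁) • y j := by
        have h1 : wb ((s * A) • z) (M₁ • (L₁ • y j)) :=
          hwb_trans _ _ _ hz3 (hwb_smul M₁ _ _ (hy j))
        have h2 := hwb_le _ _ h1
        rwa [smul_smul] at h2
      -- e2 : z ≤ L₁ • y j
      have e2 : z ≤ L₁ • y j := hwb_le _ _ (hwb_trans _ _ _ hz1 (hy j))
      have f1 : (k ^ 2 * L₁) • ((s * A) • z) ≤ (k ^ 2 * L₁) • ((M₁ * L₁) • y j) :=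
        nsmul_le_nsmul_right e1 _
      have f2 : (s * k) • z ≤ (s * k) • (L₁ • y j) :=
        nsmul_le_nsmul_right e2 _
      have f3 := add_le_add f1 f2
      rw [smul_smul, smul_smul, smul_smul, ← add_smul, ← add_smul] at f3
      have hsc1 : (k * L₁ * A + 1) * (k * s) = k ^ 2 * L₁ * (s * A) + s * k := by
        have : A = k * (M₁ * L₁) + s := by rw [hA, hs]; ring
        rw [this]; ring
      have hsc2 : k * L₁ * A = k ^ 2 * L₁ * (M₁ * L₁) + s * k * L₁ := by
        have : A = k * (M₁ * L₁) + s := by rw [hA, hs]; ring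
        rw [this]; ring
      calc (k * L₁ * A + 1) • (k • s • z)
          = ((k * L₁ * A + 1) * (k * s)) • z := by
            rw [smul_smul, smul_smul]; ring_nf
        _ = (k ^ 2 * L₁ * (s * A) + s * k) • z := by rw [hsc1]
        _ ≤ (k ^ 2 * L₁ * (M₁ * L₁) + s * k * L₁) • y j := f3
        _ = (k * L₁ * A) • y j := by rw [hsc2]
    have h := hc (k • s • z) y (fun j => ⟨k * L₁ * A, Nat.mul_pos (Nat.mul_pos hk hL₁) hApos, key j⟩)
    exact h.trans hysum
  · -- x' ≤ A • (s • z)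
    have h := hwb_le _ _ hz2
    calc x' ≤ (s * A) • z := h
      _ = A • s • z := by rw [smul_smul, mul_comm]
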